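/- The value map V of the POB(n,r) system is a bijection from the set of binary strings of length n having exactly r ones onto the set of integers {0, 1, …, C(n,r) − 1}: V is injective, every value V(B) lies in this range, and every integer in this range is attained as V(B) for some such string B. -/

import Mathlib

open Finset

/-- The value of a POB(n,r) number: for a binary string `b` of length `n`,
`pobVal n b = ∑ j, b j * C(j, p j)` where `p j` is the number of ones among
positions `0, …, j` (inclusive). -/
def pobVal (n : ℕ) (b : Fin n → Bool) : ℕ :=
  ∑ j : Fin n,
    if b j then Nat.choose (j : ℕ) ((Finset.Iic j).filter (fun i => b i = true)).card
    else 0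


lemma Iic_castSucc' {n : ℕ} (i : Fin n) :
    Finset.Iic (Fin.castSucc i) = (Finset.Iic i).map Fin.castSuccEmb := by
  ext j
  simp only [mem_Iic, mem_map, RelEmbedding.coe_toEmbedding, Fin.castSuccEmb_apply, Fin.coe_castSucc]
  constructor
  · intro h
    have hj : (j : ℕ) < n := lt_of_le_of_lt (by exact_mod_cast h) i.isLt
    exact ⟨⟨j, hj⟩, by simpa [Fin.le_def] using h, by simp [Fin.ext_iff]⟩
  · rintro ⟨k, hk, rfl⟩
    exact Fin.castSucc_le_castSucc_iff.mpr hk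

lemma onesBelow_snoc {n : ℕ} (b : Fin n → Bool) (x : Bool) (i : Fin n) :
    ((Finset.Iic (Fin.castSucc i)).filter (fun j => (Fin.snoc b x : Fin _ → Bool) j = true)).card
      = ((Finset.Iic i).filter (fun j => b j = true)).card := by
  rw [Iic_castSucc', Finset.filter_map, Finset.card_map]
  congr 1
  ext j
  rw [Finset.mem_filter]
  simp [Fin.snoc_castSucc]

lemma onesCard_snoc {n : ℕ} (b : Fin n → Bool) (x : Bool) :
    (Finset.univ.filter (fun j : Fin (n+1) => (Fin.snoc b x : Fin _ → Bool) j = true)).card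
      = (Finset.univ.filter (fun j : Fin n => b j = true)).card + (if x then 1 else 0) := by
  rw [Finset.card_filter, Finset.card_filter, Fin.sum_univ_castSucc]
  simp [Fin.snoc_castSucc, Fin.snoc_last]

lemma pobVal_snoc {n : ℕ} (b : Fin n → Bool) (x : Bool) :
    pobVal (n+1) (Fin.snoc b x : Fin (n+1) → Bool)
      = pobVal n b + (if x then
          Nat.choose n ((Finset.univ.filter (fun j : Fin n => b j = true)).card + 1) else 0) := by
  unfold pobVal
  rw [Fin.sum_univ_castSucc]
  congr 1
  · apply Finset.sum_congr rfl
    intro i _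
    rw [onesBelow_snoc]
    simp [Fin.snoc_castSucc]
  · rcases x with _ | _
    · simp [Fin.snoc_last]
    · simp only [Fin.snoc_last, if_pos rfl, Fin.val_last]
      congr 1
      rw [show Finset.Iic (Fin.last n) = Finset.univ from by ext j; simp [Fin.le_last]]
      rw [onesCard_snoc]
      simp

lemma mem_S {n r : ℕ} {b : Fin n → Bool}
    (h : (Finset.univ.filter (fun j : Fin n => b j = true)).card = r) :
    b ∈ {b : Fin n → Bool | (Finset.univ.filter (fun j : Fin n => b j = true)).card = r} := h

lemma pob_main (n : ℕ) : ∀ r : ℕ, Set.BijOn (pobVal n)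
    {b : Fin n → Bool | (Finset.univ.filter (fun j : Fin n => b j = true)).card = r}
    (Set.Iio (Nat.choose n r)) := by
  induction n with
  | zero =>
    intro r
    rcases r with _ | r
    · refine ⟨?_, ?_, ?_⟩
      · intro b _
        simp [pobVal, Set.mem_Iio]
      · intro b _ c _ _
        funext j; exact j.elim0
      · intro v hv
        simp only [Set.mem_Iio, Nat.choose_zero_right, Nat.lt_one_iff] at hv
        subst hv
        exact ⟨fun i => i.elim0, by simp, by simp [pobVal]⟩
    · have h1 : {b : Fin 0 → Bool |
          (Finset.univ.filter (fun j : Fin 0 => b j = true)).card = r + 1} = ∅ := by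
        ext b; simp
      have h2 : Set.Iio (Nat.choose 0 (r + 1)) = (∅ : Set ℕ) := by
        ext v; simp [Nat.choose_eq_zero_of_lt (Nat.succ_pos r)]
      rw [h1, h2]
      exact ⟨fun b hb => hb.elim, fun b hb => hb.elim, fun v hv => hv.elim⟩
  | succ n ih =>
    intro r
    refine ⟨?_, ?_, ?_⟩
    · -- MapsTo
      intro b hb
      rw [Set.mem_setOf_eq, ← Fin.snoc_init_self b, onesCard_snoc] at hb
      rw [Set.mem_Iio, ← Fin.snoc_init_self b, pobVal_snoc]
      rcases hx : b (Fin.last n) with _ | _ <;> rw [hx] at hb <;>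
        simp only [if_true, if_false, Bool.false_eq_true, add_zero] at hb ⊢
      · have h1 := Set.mem_Iio.mp ((ih r).mapsTo (mem_S hb))
        exact lt_of_lt_of_le h1 (Nat.choose_le_choose r (Nat.le_succ n))
      · have h1 := Set.mem_Iio.mp ((ih _).mapsTo (mem_S (rfl :
          (Finset.univ.filter (fun j : Fin n => Fin.init b j = true)).card = _)))
        subst hb
        have hcs : (n+1).choose ((Finset.univ.filter (fun j : Fin n => Fin.init b j = true)).card + 1)
            = n.choose (Finset.univ.filter (fun j : Fin n => Fin.init b j = true)).card
              + n.choose ((Finset.univ.filter (fun j : Fin n => Fin.init b j = true)).card + 1) :=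
          Nat.choose_succ_succ n _
        omega
    · -- InjOn
      intro b hb c hc heq
      rw [Set.mem_setOf_eq, ← Fin.snoc_init_self b, onesCard_snoc] at hb
      rw [Set.mem_setOf_eq, ← Fin.snoc_init_self c, onesCard_snoc] at hc
      rw [← Fin.snoc_init_self b, ← Fin.snoc_init_self c, pobVal_snoc, pobVal_snoc] at heq
      have hbval := Set.mem_Iio.mp ((ih _).mapsTo (mem_S (rfl :
          (Finset.univ.filter (fun j : Fin n => Fin.init b j = true)).card = _)))
      have hcval := Set.mem_Iio.mp ((ih _).mapsTo (mem_S (rfl :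
          (Finset.univ.filter (fun j : Fin n => Fin.init c j = true)).card = _)))
      rw [← Fin.snoc_init_self b, ← Fin.snoc_init_self c]
      rcases hx : b (Fin.last n) with _ | _ <;> rcases hy : c (Fin.last n) with _ | _ <;>
        rw [hx] at hb heq <;> rw [hy] at hc heq <;>
        simp only [if_true, if_false, Bool.false_eq_true, add_zero] at hb hc heq
      · -- both false
        have hic : Fin.init b = Fin.init c :=
          (ih r).injOn (mem_S hb) (mem_S hc) heq
        rw [hic]
      · -- b false, c true : contradiction
        exfalso
        have hrb : (Finset.univ.filter (fun j : Fin n => Fin.init b j = true)).card = r := hb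
        rw [hrb] at hbval
        have : n.choose ((Finset.univ.filter (fun j : Fin n => Fin.init c j = true)).card + 1)
            = n.choose r := by rw [hc]
        omega
      · -- b true, c false
        exfalso
        have hrc : (Finset.univ.filter (fun j : Fin n => Fin.init c j = true)).card = r := hc
        rw [hrc] at hcval
        have : n.choose ((Finset.univ.filter (fun j : Fin n => Fin.init b j = true)).card + 1)
            = n.choose r := by rw [hb]
        omega
      · -- both true
        have hkm : (Finset.univ.filter (fun j : Fin n => Fin.init b j = true)).card
            = (Finset.univ.filter (fun j : Fin n => Fin.init c j = true)).card := by omega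
        rw [hkm] at heq hbval
        have heq' : pobVal n (Fin.init b) = pobVal n (Fin.init c) := by omega
        have hic : Fin.init b = Fin.init c :=
          (ih _).injOn (mem_S hkm) (mem_S rfl) heq'
        rw [hic]
    · -- SurjOn
      intro v hv
      rw [Set.mem_Iio] at hv
      rcases lt_or_ge v (Nat.choose n r) with h | h
      · obtain ⟨b', hb', hval⟩ := (ih r).surjOn (Set.mem_Iio.mpr h)
        refine ⟨Fin.snoc b' false, ?_, ?_⟩
        · rw [Set.mem_setOf_eq, onesCard_snoc]
          simpa using hb'
        · rw [pobVal_snoc, if_neg (by simp), add_zero, hval]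
      · rcases r with _ | k
        · simp only [Nat.choose_zero_right] at hv h; omega
        · have hsum : (n+1).choose (k+1) = n.choose k + n.choose (k+1) :=
            Nat.choose_succ_succ n k
          have hlt : v - Nat.choose n (k+1) < Nat.choose n k := by omega
          obtain ⟨b', hb', hval⟩ := (ih k).surjOn (Set.mem_Iio.mpr hlt)
          have hbk : (Finset.univ.filter (fun j : Fin n => b' j = true)).card = k := hb'
          refine ⟨Fin.snoc b' true, ?_, ?_⟩
          · rw [Set.mem_setOf_eq, onesCard_snoc, hbk]
            simp
          · rw [pobVal_snoc, if_pos rfl, hbk, hval]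
            omega

theorem pobVal_bijOn (n r : ℕ) (hrn : r ≤ n) :
    Set.BijOn (pobVal n)
      {b : Fin n → Bool | (Finset.univ.filter (fun j : Fin n => b j = true)).card = r}
      (Set.Iio (Nat.choose n r)) :=
  pob_main n r
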